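/- For positive semidefinite d×d matrices Σ1, Σ2, the inequality trace(Σ1) + trace(Σ2) ≥ 2·trace((Σ2^{1/2} Σ1 Σ2^{1/2})^{1/2}) holds. -/

import Mathlib

open Matrix

section
open scoped ComplexOrder

/-- The positive semidefinite square root, as defined in the older Mathlib
(`Matrix.PosSemidef.sqrt`, since removed). -/
noncomputable def Matrix.PosSemidef.sqrt {n : Type*} [Fintype n] [DecidableEq n] {𝕜 : Type*}
    [RCLike 𝕜] {A : Matrix n n 𝕜} (hA : A.PosSemidef) : Matrix n n 𝕜 :=
  hA.1.eigenvectorUnitary.1 * diagonal ((↑) ∘ (√·) ∘ hA.1.eigenvalues) *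
    (star hA.1.eigenvectorUnitary : Matrix n n 𝕜)

end

lemma Matrix.PosSemidef.sqrt_mul_self {d : ℕ} {A : Matrix (Fin d) (Fin d) ℝ}
    (hA : A.PosSemidef) : hA.sqrt * hA.sqrt = A := by
  have hU : (star hA.1.eigenvectorUnitary : Matrix (Fin d) (Fin d) ℝ) *
      hA.1.eigenvectorUnitary.1 = 1 := Unitary.coe_star_mul_self _
  conv_rhs => rw [hA.1.spectral_theorem, Unitary.conjStarAlgAut_apply]
  simp only [Matrix.PosSemidef.sqrt]
  calc _ = hA.1.eigenvectorUnitary.1 * (diagonal ((RCLike.ofReal : ℝ → ℝ) ∘ (√·) ∘ hA.1.eigenvalues) *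
        ((star hA.1.eigenvectorUnitary : Matrix (Fin d) (Fin d) ℝ) * hA.1.eigenvectorUnitary.1) *
        diagonal ((RCLike.ofReal : ℝ → ℝ) ∘ (√·) ∘ hA.1.eigenvalues)) *
        (star hA.1.eigenvectorUnitary : Matrix (Fin d) (Fin d) ℝ) := by
          simp only [Matrix.mul_assoc]
    _ = _ := by
      rw [hU, Matrix.mul_one, diagonal_mul_diagonal]
      congr 3
      funext i
      simp [Real.mul_self_sqrt (hA.eigenvalues_nonneg i)]

lemma Matrix.PosSemidef.posSemidef_sqrt {d : ℕ} {A : Matrix (Fin d) (Fin d) ℝ}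
    (hA : A.PosSemidef) : hA.sqrt.PosSemidef := by
  have hD : (diagonal ((RCLike.ofReal : ℝ → ℝ) ∘ (√·) ∘ hA.1.eigenvalues) : Matrix (Fin d) (Fin d) ℝ).PosSemidef := by
    rw [posSemidef_diagonal_iff]
    intro i
    simp [Real.sqrt_nonneg]
  have := hD.conjTranspose_mul_mul_same (star hA.1.eigenvectorUnitary : Matrix (Fin d) (Fin d) ℝ)
  unfold Matrix.PosSemidef.sqrt
  simpa only [Matrix.star_eq_conjTranspose, conjTranspose_conjTranspose] using this

lemma trace_nonneg_of_psd {d : ℕ} {A : Matrix (Fin d) (Fin d) ℝ}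
    (hA : A.PosSemidef) : 0 ≤ A.trace := by
  rw [Matrix.trace]
  refine Finset.sum_nonneg fun i _ => ?_
  exact hA.diag_nonneg

lemma trace_mul_nonneg_of_psd {d : ℕ} {A B : Matrix (Fin d) (Fin d) ℝ}
    (hA : A.PosSemidef) (hB : B.PosSemidef) : 0 ≤ (A * B).trace := by
  have h1 : A * B = hA.sqrt * (hA.sqrt * B) := by
    rw [← Matrix.mul_assoc, hA.sqrt_mul_self]
  rw [h1, Matrix.trace_mul_comm, Matrix.mul_assoc, ← Matrix.mul_assoc]
  have hpsd : (hA.sqrt * B * hA.sqrt).PosSemidef := by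
    have := hB.conjTranspose_mul_mul_same hA.sqrt
    rwa [hA.posSemidef_sqrt.1] at this
  exact trace_nonneg_of_psd hpsd

set_option maxHeartbeats 1600000 in
/-- For positive semidefinite `S₁, S₂`,
`tr S₁ + tr S₂ ≥ 2 tr((S₂^{1/2} S₁ S₂^{1/2})^{1/2})`. -/
theorem stmt_9 {d : ℕ} (S₁ S₂ : Matrix (Fin d) (Fin d) ℝ)
    (hS₁ : S₁.PosSemidef) (hS₂ : S₂.PosSemidef)
    (hC : (hS₂.sqrt * S₁ * hS₂.sqrt).PosSemidef) :
    2 * Matrix.trace hC.sqrt ≤ Matrix.trace S₁ + Matrix.trace S₂ := by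
  set B := hS₂.sqrt with hBdef
  set R := hC.sqrt with hRdef
  refine le_of_forall_pos_le_add fun ε hε => ?_
  set δ : ℝ := ε / (d + 1) with hδdef
  have hδ : 0 < δ := div_pos hε (by positivity)
  set X : Matrix (Fin d) (Fin d) ℝ := S₂ + δ • 1 with hXdef
  have hXpd : X.PosDef := by
    refine Matrix.PosDef.posSemidef_add hS₂ ?_
    rw [Matrix.smul_one_eq_diagonal]
    exact Matrix.PosDef.diagonal fun _ => hδ
  have hXinv : (X⁻¹).PosDef := hXpd.inv
  set Y := hXinv.posSemidef.sqrt with hYdef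
  have hYsq : Y * Y = X⁻¹ := hXinv.posSemidef.sqrt_mul_self
  have hYherm : Y.IsHermitian := hXinv.posSemidef.posSemidef_sqrt.1
  have hRherm : R.IsHermitian := hC.posSemidef_sqrt.1
  have hRsq : R * R = B * S₁ * B := hC.sqrt_mul_self
  have hXdet : IsUnit X.det := (Matrix.isUnit_iff_isUnit_det X).mp hXpd.isUnit
  have hYdet : IsUnit Y.det := by
    have h2 : IsUnit (X⁻¹).det := (Matrix.isUnit_iff_isUnit_det _).mp hXinv.isUnit
    rw [← hYsq, Matrix.det_mul] at h2
    exact isUnit_of_mul_isUnit_left h2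
  set M := R * Y - Y⁻¹ with hMdef
  have hMpsd : (Mᴴ * M).PosSemidef := Matrix.posSemidef_conjTranspose_mul_self M
  have hMH : Mᴴ = Y * R - Y⁻¹ := by
    rw [hMdef, Matrix.conjTranspose_sub, Matrix.conjTranspose_mul, hYherm.eq, hRherm.eq,
      Matrix.conjTranspose_nonsing_inv, hYherm.eq]
  have hexpand : (Mᴴ * M).trace = (B * S₁ * B * X⁻¹).trace - 2 * R.trace + X.trace := by
    rw [hMH, hMdef, Matrix.sub_mul, Matrix.mul_sub, Matrix.mul_sub]
    have e1 : (Y * R * (R * Y)).trace = (B * S₁ * B * X⁻¹).trace := by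
      have h : Y * R * (R * Y) = Y * (B * S₁ * B) * Y := by
        rw [← hRsq]; simp only [Matrix.mul_assoc]
      rw [h, Matrix.trace_mul_comm (Y * (B * S₁ * B)) Y, ← Matrix.mul_assoc, hYsq,
        Matrix.trace_mul_comm (X⁻¹) (B * S₁ * B)]
    have e2 : (Y * R * Y⁻¹).trace = R.trace := by
      rw [Matrix.trace_mul_comm (Y * R) Y⁻¹, ← Matrix.mul_assoc,
        Matrix.nonsing_inv_mul Y hYdet, Matrix.one_mul]
    have e3 : (Y⁻¹ * (R * Y)).trace = R.trace := by
      rw [Matrix.trace_mul_comm Y⁻¹ (R * Y), Matrix.mul_assoc,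
        Matrix.mul_nonsing_inv Y hYdet, Matrix.mul_one]
    have e4 : (Y⁻¹ * Y⁻¹).trace = X.trace := by
      rw [← Matrix.mul_inv_rev, hYsq, Matrix.nonsing_inv_nonsing_inv X hXdet]
    rw [Matrix.trace_sub, Matrix.trace_sub, Matrix.trace_sub, e1, e2, e3, e4]
    ring
  have hcore : 2 * R.trace ≤ (B * S₁ * B * X⁻¹).trace + X.trace := by
    have hnn := trace_nonneg_of_psd hMpsd
    rw [hexpand] at hnn
    linarith
  have hB2 : B * B = S₂ := hS₂.sqrt_mul_self
  have hBX : B * X = X * B := by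
    rw [hXdef, Matrix.mul_add, Matrix.add_mul, ← hB2, ← Matrix.mul_assoc,
      Matrix.mul_smul, Matrix.smul_mul, Matrix.mul_one, Matrix.one_mul]
  have hBXinv : B * X⁻¹ = X⁻¹ * B := by
    calc B * X⁻¹ = X⁻¹ * X * B * X⁻¹ := by
          rw [Matrix.nonsing_inv_mul X hXdet, Matrix.one_mul]
      _ = X⁻¹ * B * X * X⁻¹ := by rw [Matrix.mul_assoc X⁻¹ X B, ← hBX, ← Matrix.mul_assoc]
      _ = X⁻¹ * B := by
          rw [Matrix.mul_assoc, Matrix.mul_assoc, Matrix.mul_nonsing_inv X hXdet,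
            Matrix.mul_one]
  have hXinvpsd : (X⁻¹).PosSemidef := hXinv.posSemidef
  have htr1 : (B * S₁ * B * X⁻¹).trace = (S₁ * (X⁻¹ * S₂)).trace := by
    have hsplit : B * S₁ * B * X⁻¹ = (B * S₁) * (B * X⁻¹) := Matrix.mul_assoc _ _ _
    rw [hsplit, Matrix.trace_mul_comm (B * S₁) (B * X⁻¹)]
    have h6 : (B * X⁻¹) * (B * S₁) = (X⁻¹ * S₂) * S₁ := by
      rw [hBXinv, ← hB2]
      simp only [Matrix.mul_assoc]
    rw [h6, Matrix.trace_mul_comm (X⁻¹ * S₂) S₁]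
  have htr2 : (S₁ * (X⁻¹ * S₂)).trace ≤ S₁.trace := by
    have h1minus : (1 : Matrix (Fin d) (Fin d) ℝ) - X⁻¹ * S₂ = δ • X⁻¹ := by
      have hinvmul : X⁻¹ * X = 1 := Matrix.nonsing_inv_mul X hXdet
      calc (1 : Matrix (Fin d) (Fin d) ℝ) - X⁻¹ * S₂
          = X⁻¹ * X - X⁻¹ * S₂ := by rw [hinvmul]
        _ = X⁻¹ * (X - S₂) := by rw [Matrix.mul_sub]
        _ = X⁻¹ * (δ • 1) := by rw [hXdef]; congr 1; abel
        _ = δ • X⁻¹ := by rw [Matrix.mul_smul, Matrix.mul_one]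
    have key : S₁.trace - (S₁ * (X⁻¹ * S₂)).trace = δ * (S₁ * X⁻¹).trace := by
      have h5 : S₁.trace - (S₁ * (X⁻¹ * S₂)).trace = (S₁ * (1 - X⁻¹ * S₂)).trace := by
        rw [Matrix.mul_sub, Matrix.trace_sub, Matrix.mul_one]
      rw [h5, h1minus, Matrix.mul_smul, Matrix.trace_smul, smul_eq_mul]
    have hnn : 0 ≤ δ * (S₁ * X⁻¹).trace :=
      mul_nonneg hδ.le (trace_mul_nonneg_of_psd hS₁ hXinvpsd)
    linarith
  have htrX : X.trace = S₂.trace + δ * d := by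
    rw [hXdef, Matrix.trace_add, Matrix.trace_smul, Matrix.trace_one, smul_eq_mul,
      Fintype.card_fin]
  have hδd : δ * d ≤ ε := by
    rw [hδdef, div_mul_eq_mul_div, div_le_iff₀ (by positivity : (0:ℝ) < d + 1)]
    nlinarith
  calc 2 * R.trace ≤ (B * S₁ * B * X⁻¹).trace + X.trace := hcore
    _ = (S₁ * (X⁻¹ * S₂)).trace + (S₂.trace + δ * d) := by rw [htr1, htrX]
    _ ≤ S₁.trace + S₂.trace + ε := by linarith
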